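/- Let (Ω, B) be a measurable space, P a linear submarkovian operator on B_b(Ω) satisfying the Jensen inequality (Pf)² ≤ P(f²), and P* the adjoint acting on finite nonnegative measures via ∫ f d(P*μ) = ∫ Pf dμ. If for every C¹ curve ζ : [0,1] → B_b(Ω) with ∂_s ζ_s + ζ_s² ≤ 0 one has He₂²(μ₀,μ₁) ≥ ∫ ζ₁ dμ₁ − ∫ ζ₀ dμ₀ with equality in the supremum, then He₂(P*μ₀, P*μ₁) ≤ He₂(μ₀, μ₁) for all finite nonnegative measures μ₀, μ₁. -/

import Mathlib

open MeasureTheory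
open scoped ENNReal

/-- A bounded measurable `C¹` subsolution of `∂_s ζ_s + ζ_s² ≤ 0` on `[0,1]`. -/
def IsHellingerSubsol {Ω : Type*} [MeasurableSpace Ω] (ζ : ℝ → Ω → ℝ) : Prop :=
  ∃ ζ' : ℝ → Ω → ℝ,
    (∀ x, ∀ t ∈ Set.Icc (0 : ℝ) 1, HasDerivAt (fun s => ζ s x) (ζ' t x) t) ∧
    (∀ x, ContinuousOn (fun t => ζ' t x) (Set.Icc (0 : ℝ) 1)) ∧
    (∀ x, ∀ t ∈ Set.Icc (0 : ℝ) 1, ζ' t x + (ζ t x) ^ 2 ≤ 0) ∧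
    (∀ t, Measurable (ζ t)) ∧ (∃ C : ℝ, ∀ t x, |ζ t x| ≤ C)

private lemma phi_eq {a : ℝ} (h : 0 < 1 + a) :
    a ^ 2 / (1 + a) ^ 2 + 1 / (1 + a) ^ 2 * a = a / (1 + a) := by
  field_simp
  ring

private lemma tangent_ineq {a t : ℝ} (ha : -1 < a) (ht : -1 < t) :
    a / (1 + a) ≤ t ^ 2 / (1 + t) ^ 2 + (1 / (1 + t) ^ 2) * a := by
  have h1 : 0 < 1 + a := by linarith
  have h2 : 0 < 1 + t := by linarith
  have key : a / (1 + a) ≤ (t ^ 2 + a) / (1 + t) ^ 2 := by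
    rw [div_le_div_iff₀ h1 (by positivity)]
    nlinarith [sq_nonneg (t - a)]
  have e : (t ^ 2 + a) / (1 + t) ^ 2 = t ^ 2 / (1 + t) ^ 2 + (1 / (1 + t) ^ 2) * a := by
    ring
  linarith [key, e.le, e.ge]

private lemma recip_key {u v : ℝ} (hu : u ≠ 0) (hv : v ≠ 0) (huv : 0 < u * v)
    (hrec : u⁻¹ + 1 ≤ v⁻¹) : v + u * v ≤ u := by
  have h := mul_le_mul_of_nonneg_left hrec huv.le
  have e1 : u * v * (u⁻¹ + 1) = v + u * v := by field_simp
  have e2 : u * v * v⁻¹ = u := by field_simp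
  linarith [h]

private lemma subsol_antitone {f f' : ℝ → ℝ}
    (hd : ∀ t ∈ Set.Icc (0:ℝ) 1, HasDerivAt f (f' t) t)
    (hi : ∀ t ∈ Set.Icc (0:ℝ) 1, f' t + f t ^ 2 ≤ 0) :
    AntitoneOn f (Set.Icc 0 1) := by
  apply antitoneOn_of_deriv_nonpos (convex_Icc 0 1)
  · exact fun t ht => (hd t ht).continuousAt.continuousWithinAt
  · rw [interior_Icc]
    exact fun t ht => ((hd t (Set.Ioo_subset_Icc_self ht)).differentiableAt).differentiableWithinAt
  · rw [interior_Icc]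
    intro t ht
    rw [(hd t (Set.Ioo_subset_Icc_self ht)).deriv]
    nlinarith [hi t (Set.Ioo_subset_Icc_self ht), sq_nonneg (f t)]

private lemma subsol_recip {f f' : ℝ → ℝ}
    (hd : ∀ t ∈ Set.Icc (0:ℝ) 1, HasDerivAt f (f' t) t)
    (hi : ∀ t ∈ Set.Icc (0:ℝ) 1, f' t + f t ^ 2 ≤ 0)
    (hne : ∀ t ∈ Set.Icc (0:ℝ) 1, f t ≠ 0) :
    (f 0)⁻¹ + 1 ≤ (f 1)⁻¹ := by
  have hgd : ∀ t ∈ Set.Icc (0:ℝ) 1,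
      HasDerivAt (fun s => (f s)⁻¹ - s) (-(f' t) / f t ^ 2 - 1) t := fun t ht =>
    ((hd t ht).inv (hne t ht)).sub (hasDerivAt_id t)
  have hmono : MonotoneOn (fun s => (f s)⁻¹ - s) (Set.Icc 0 1) := by
    apply monotoneOn_of_deriv_nonneg (convex_Icc 0 1)
    · exact fun t ht => (hgd t ht).continuousAt.continuousWithinAt
    · rw [interior_Icc]
      exact fun t ht => ((hgd t (Set.Ioo_subset_Icc_self ht)).differentiableAt).differentiableWithinAt
    · rw [interior_Icc]
      intro t ht
      have ht' := Set.Ioo_subset_Icc_self ht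
      rw [(hgd t ht').deriv]
      have h2 : 0 < f t ^ 2 :=
        lt_of_le_of_ne (sq_nonneg _) (Ne.symm (pow_ne_zero 2 (hne t ht')))
      rw [sub_nonneg, le_div_iff₀ h2]
      nlinarith [hi t ht']
  have h := hmono (Set.left_mem_Icc.2 zero_le_one) (Set.right_mem_Icc.2 zero_le_one) zero_le_one
  simp only at h
  linarith

private lemma subsol_facts {f f' : ℝ → ℝ} {C : ℝ}
    (hd : ∀ t ∈ Set.Icc (0:ℝ) 1, HasDerivAt f (f' t) t)
    (hi : ∀ t ∈ Set.Icc (0:ℝ) 1, f' t + f t ^ 2 ≤ 0)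
    (hC1 : 1 ≤ C) (hb : ∀ t ∈ Set.Icc (0:ℝ) 1, |f t| ≤ C) :
    -(C / (C + 1)) ≤ f 0 ∧ f 1 ≤ f 0 / (1 + f 0) := by
  have hCpos : 0 < C := lt_of_lt_of_le one_pos hC1
  have hC1pos : 0 < C + 1 := by linarith
  have hanti := subsol_antitone hd hi
  have mem0 : (0:ℝ) ∈ Set.Icc (0:ℝ) 1 := Set.left_mem_Icc.2 zero_le_one
  have mem1 : (1:ℝ) ∈ Set.Icc (0:ℝ) 1 := Set.right_mem_Icc.2 zero_le_one
  have h01 : f 1 ≤ f 0 := hanti mem0 mem1 zero_le_one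
  rcases lt_trichotomy (f 0) 0 with hneg | hzero | hpos
  · -- f 0 < 0 : f stays negative
    have hne : ∀ t ∈ Set.Icc (0:ℝ) 1, f t ≠ 0 := fun t ht =>
      ne_of_lt (lt_of_le_of_lt (hanti mem0 ht ht.1) hneg)
    have hrec := subsol_recip hd hi hne
    have hv : f 1 < 0 := lt_of_le_of_lt h01 hneg
    have huv : 0 < f 0 * f 1 := mul_pos_of_neg_of_neg hneg hv
    have key := recip_key hneg.ne hv.ne huv hrec
    have hu1 : 0 < 1 + f 0 := by
      by_contra hcon
      push_neg at hcon
      nlinarith [key]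
    have hvC : -C ≤ f 1 := (abs_le.1 (hb 1 mem1)).1
    constructor
    · rw [neg_le, le_div_iff₀ hC1pos]
      nlinarith [key, mul_le_mul_of_nonneg_right hvC hu1.le]
    · rw [le_div_iff₀ hu1]
      nlinarith [key]
  · constructor
    · rw [hzero]
      have : 0 ≤ C / (C + 1) := by positivity
      linarith
    · have h0 : f 1 ≤ 0 := hzero ▸ h01
      rw [hzero]
      simpa using h0
  · constructor
    · have : 0 ≤ C / (C + 1) := by positivity
      linarith
    · rcases le_or_gt (f 1) 0 with h1 | h1
      · have : 0 ≤ f 0 / (1 + f 0) := by positivity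
        linarith
      · have hne : ∀ t ∈ Set.Icc (0:ℝ) 1, f t ≠ 0 := fun t ht =>
          (lt_of_lt_of_le h1 (hanti ht mem1 ht.2)).ne'
        have hrec := subsol_recip hd hi hne
        have huv : 0 < f 0 * f 1 := mul_pos hpos h1
        have key := recip_key hpos.ne' h1.ne' huv hrec
        have hu1 : 0 < 1 + f 0 := by linarith
        rw [le_div_iff₀ hu1]
        nlinarith [key]


set_option maxHeartbeats 1000000 in
/-- Hellinger contraction for a linear submarkovian operator `P` satisfying Jensen's
inequality, via the dynamic dual formulation of `He₂²`: if `He₂²` coincides with the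
supremum of `∫ζ₁dμ₁ − ∫ζ₀dμ₀` over `C¹` subsolutions of `∂_sζ + ζ² ≤ 0`, then
`He₂(P*μ₀,P*μ₁) ≤ He₂(μ₀,μ₁)`. -/
theorem hellinger_contraction_submarkov {Ω : Type*} [MeasurableSpace Ω]
    (P : (Ω → ℝ) → (Ω → ℝ))
    (hadd : ∀ f g : Ω → ℝ, P (f + g) = P f + P g)
    (hsmul : ∀ (c : ℝ) (f : Ω → ℝ), P (c • f) = c • P f)
    (hsub : ∀ f : Ω → ℝ, (∀ x, 0 ≤ f x) → (∀ x, f x ≤ 1) →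
        (∀ x, 0 ≤ P f x) ∧ (∀ x, P f x ≤ 1))
    (hmeas : ∀ f : Ω → ℝ, Measurable f → (∃ C : ℝ, ∀ x, |f x| ≤ C) →
        Measurable (P f) ∧ ∃ C : ℝ, ∀ x, |P f x| ≤ C)
    (hjensen : ∀ f : Ω → ℝ, Measurable f → (∃ C : ℝ, ∀ x, |f x| ≤ C) →
        ∀ x, (P f x) ^ 2 ≤ P (fun y => f y ^ 2) x)
    (Pstar : Measure Ω → Measure Ω)
    (hPstarFin : ∀ μ : Measure Ω, IsFiniteMeasure μ → IsFiniteMeasure (Pstar μ))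
    (hadj : ∀ (μ : Measure Ω), IsFiniteMeasure μ →
        ∀ f : Ω → ℝ, Measurable f → (∃ C : ℝ, ∀ x, |f x| ≤ C) →
        ∫ x, f x ∂(Pstar μ) = ∫ x, P f x ∂μ)
    (He2sq : Measure Ω → Measure Ω → ℝ≥0∞)
    (hdual : ∀ (μ₀ μ₁ : Measure Ω), IsFiniteMeasure μ₀ → IsFiniteMeasure μ₁ →
        He2sq μ₀ μ₁ = ⨆ ζ ∈ {ζ : ℝ → Ω → ℝ | IsHellingerSubsol ζ},
          ENNReal.ofReal (∫ x, ζ 1 x ∂μ₁ - ∫ x, ζ 0 x ∂μ₀))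
    (μ₀ μ₁ : Measure Ω) (hμ₀ : IsFiniteMeasure μ₀) (hμ₁ : IsFiniteMeasure μ₁) :
    He2sq (Pstar μ₀) (Pstar μ₁) ≤ He2sq μ₀ μ₁ := by
  haveI := hμ₀; haveI := hμ₁
  -- Basic properties of P
  have hP1 := hsub (fun _ => 1) (fun _ => zero_le_one) (fun _ => le_refl 1)
  have hPmono : ∀ f g : Ω → ℝ, (∀ x, f x ≤ g x) → (∃ M : ℝ, ∀ x, g x - f x ≤ M) →
      ∀ x, P f x ≤ P g x := by
    rintro f g hfg ⟨M, hM⟩ x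
    set M' := max M 1 with hM'
    have hM'pos : 0 < M' := lt_of_lt_of_le one_pos (le_max_right _ _)
    set h : Ω → ℝ := fun y => (g y - f y) / M' with hh
    have h0 : ∀ y, 0 ≤ h y := fun y => div_nonneg (by linarith [hfg y]) hM'pos.le
    have h1 : ∀ y, h y ≤ 1 := fun y =>
      (div_le_one hM'pos).2 (le_trans (hM y) (le_max_left _ _))
    have hgeq : g = f + M' • h := by
      funext y
      simp only [hh, Pi.add_apply, Pi.smul_apply, smul_eq_mul]
      field_simp
      ring
    have hpos := (hsub h h0 h1).1 x
    rw [hgeq, hadd, hsmul]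
    simp only [Pi.add_apply, Pi.smul_apply, smul_eq_mul]
    nlinarith [hpos]
  have hPconst : ∀ (c : ℝ) (x : Ω), P (fun _ => c) x = c * P (fun _ => 1) x := by
    intro c x
    have e : (fun _ : Ω => c) = c • (fun _ : Ω => (1:ℝ)) := by funext y; simp
    rw [e, hsmul]
    simp
  -- rewrite the goal using duality for (Pstar μ₀, Pstar μ₁)
  rw [hdual (Pstar μ₀) (Pstar μ₁) (hPstarFin μ₀ hμ₀) (hPstarFin μ₁ hμ₁)]
  refine iSup₂_le fun ζ hζ => ?_
  obtain ⟨ζ', hd, hcont, hineq, hm, C, hC⟩ := hζ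
  -- per-point comparison facts for ζ
  set C' := max C 1 with hC'
  have hC'1 : (1:ℝ) ≤ C' := le_max_right _ _
  have hC'pos : (0:ℝ) < C' := lt_of_lt_of_le one_pos hC'1
  have hbound : ∀ t x, |ζ t x| ≤ C' := fun t x => (hC t x).trans (le_max_left _ _)
  set c₀ := C' / (C' + 1) with hc₀
  have hc₀nonneg : 0 ≤ c₀ := by positivity
  have hc₀lt1 : c₀ < 1 := by
    rw [hc₀, div_lt_one (by linarith)]; linarith
  have hfacts : ∀ x, -c₀ ≤ ζ 0 x ∧ ζ 1 x ≤ ζ 0 x / (1 + ζ 0 x) := fun x =>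
    subsol_facts (hd x) (hineq x) hC'1 (fun t _ => hbound t x)
  have hζ0gt : ∀ x, -1 < ζ 0 x := fun x => lt_of_lt_of_le (by linarith) (hfacts x).1
  -- A = P ζ₀
  obtain ⟨hAmeas, CA0, hCA0⟩ := hmeas (ζ 0) (hm 0) ⟨C, fun x => hC 0 x⟩
  set A := P (ζ 0) with hA
  set CA := max CA0 0 with hCA
  have hCAnonneg : (0:ℝ) ≤ CA := le_max_right _ _
  have hAub : ∀ x, A x ≤ CA := fun x =>
    le_trans (le_of_abs_le (hCA0 x)) (le_max_left _ _)
  have hAabs : ∀ x, |A x| ≤ CA := fun x => (hCA0 x).trans (le_max_left _ _)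
  have hAlb : ∀ x, -c₀ ≤ A x := by
    intro x
    have h := hPmono (fun _ => -c₀) (ζ 0) (fun y => (hfacts y).1)
      ⟨C' + c₀, fun y => by show ζ 0 y - (-c₀) ≤ C' + c₀; linarith [(abs_le.1 (hbound 0 y)).2]⟩ x
    have h2 := hPconst (-c₀) x
    nlinarith [hP1.2 x, hP1.1 x]
  -- clamp parameters
  set ρ := min (1 / (2 * (CA + 1))) ((1 - c₀) / 2) with hρ
  have hρpos : 0 < ρ := lt_min (by positivity) (by linarith)
  set d0 := min (1/2 : ℝ) ((1 - c₀) / 2) with hd0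
  have hd0pos : 0 < d0 := lt_min (by norm_num) (by linarith)
  set cl : ℝ → ℝ := fun s => max (-ρ) (min s (1 + ρ)) with hcl
  have hclmem : ∀ s, -ρ ≤ cl s ∧ cl s ≤ 1 + ρ := fun s =>
    ⟨le_max_left _ _, max_le (by linarith) (min_le_right _ _)⟩
  have hclid : ∀ s ∈ Set.Ioo (-ρ) (1 + ρ), cl s = s := by
    intro s hs
    simp only [hcl]
    rw [min_eq_left hs.2.le, max_eq_right hs.1.le]
  have hcl0 : cl 0 = 0 := hclid 0 ⟨by linarith, by linarith⟩
  have hcl1 : cl 1 = 1 := hclid 1 ⟨by linarith, by linarith⟩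
  have hden : ∀ s x, d0 ≤ 1 + cl s * A x := by
    intro s x
    rcases le_or_gt 0 (A x) with hAx | hAx
    · have h1 : (-ρ) * A x ≤ cl s * A x :=
        mul_le_mul_of_nonneg_right (hclmem s).1 hAx
      have h2 : ρ * A x ≤ (1 / (2 * (CA + 1))) * CA :=
        mul_le_mul (min_le_left _ _) (hAub x) hAx (by positivity)
      have h3 : (1 / (2 * (CA + 1))) * CA ≤ 1/2 := by
        rw [div_mul_eq_mul_div, one_mul, div_le_iff₀ (by positivity)]
        nlinarith
      have h4 : d0 ≤ 1/2 := min_le_left _ _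
      nlinarith
    · have h1 : (1 + ρ) * A x ≤ cl s * A x :=
        mul_le_mul_of_nonpos_right (hclmem s).2 hAx.le
      have h2 : (1 + ρ) * (-c₀) ≤ (1 + ρ) * A x :=
        mul_le_mul_of_nonneg_left (hAlb x) (by linarith)
      have h3 : ρ * c₀ ≤ (1 - c₀) / 2 := by
        have : ρ * c₀ ≤ ρ * 1 := mul_le_mul_of_nonneg_left hc₀lt1.le hρpos.le
        have hρ2 : ρ ≤ (1 - c₀) / 2 := min_le_right _ _
        linarith
      have h4 : d0 ≤ (1 - c₀) / 2 := min_le_right _ _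
      nlinarith
  have hdenpos : ∀ s x, 0 < 1 + cl s * A x := fun s x =>
    lt_of_lt_of_le hd0pos (hden s x)
  -- the candidate subsolution
  set η : ℝ → Ω → ℝ := fun s x => A x / (1 + cl s * A x) with hηdef
  set η' : ℝ → Ω → ℝ := fun s x => -(A x)^2 / (1 + cl s * A x)^2 with hη'def
  have hηd : ∀ x, ∀ t ∈ Set.Icc (0:ℝ) 1, HasDerivAt (fun s => η s x) (η' t x) t := by
    intro x t ht
    have hmem : Set.Ioo (-ρ) (1 + ρ) ∈ nhds t :=
      Ioo_mem_nhds (by linarith [ht.1]) (by linarith [ht.2])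
    have hclt : cl t = t := hclid t ⟨by linarith [ht.1], by linarith [ht.2]⟩
    have hne : (1 + t * A x) ≠ 0 := by
      have h := hdenpos t x; rw [hclt] at h; exact h.ne'
    have hu : HasDerivAt (fun s : ℝ => 1 + s * A x) (A x) t := by
      simpa using ((hasDerivAt_id t).mul_const (A x)).const_add 1
    have hbase : HasDerivAt (fun s => A x / (1 + s * A x)) (η' t x) t := by
      have hdiv := (hasDerivAt_const t (A x)).div hu hne
      convert hdiv using 1
      · rfl
      · rfl
      · rfl
      · show -(A x)^2 / (1 + cl t * A x)^2 = _
        rw [hclt]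
        ring
    apply hbase.congr_of_eventuallyEq
    filter_upwards [hmem] with s hs
    simp only [hηdef]
    rw [hclid s hs]
  have hηcont : ∀ x, ContinuousOn (fun t => η' t x) (Set.Icc (0:ℝ) 1) := by
    intro x
    apply Continuous.continuousOn
    have hclc : Continuous cl := continuous_const.max (continuous_id.min continuous_const)
    exact continuous_const.div ((continuous_const.add (hclc.mul continuous_const)).pow 2)
      (fun t => pow_ne_zero 2 (hdenpos t x).ne')
  have hηineq : ∀ x, ∀ t ∈ Set.Icc (0:ℝ) 1, η' t x + (η t x) ^ 2 ≤ 0 := by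
    intro x t _
    have : η' t x + (η t x) ^ 2 = 0 := by
      simp only [hηdef, hη'def]
      field_simp
      ring
    linarith
  have hηmeas : ∀ t, Measurable (η t) := by
    intro t
    exact hAmeas.div ((hAmeas.const_mul (cl t)).const_add 1)
  have hηbd : ∀ t x, |η t x| ≤ CA / d0 := by
    intro t x
    simp only [hηdef, abs_div]
    rw [abs_of_pos (hdenpos t x)]
    exact div_le_div₀ hCAnonneg (hAabs x) hd0pos (hden t x)
  have hηsub : IsHellingerSubsol η :=
    ⟨η', hηd, hηcont, hηineq, hηmeas, ⟨CA / d0, hηbd⟩⟩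
  -- key pointwise estimate : P ζ₁ ≤ η₁
  have hkey : ∀ x0, P (ζ 1) x0 ≤ A x0 / (1 + A x0) := by
    intro x0
    have ht0 : -1 < A x0 := lt_of_lt_of_le (by linarith) (hAlb x0)
    have h1t0 : 0 < 1 + A x0 := by linarith
    set c := (A x0)^2 / (1 + A x0)^2 with hc
    set m := 1 / (1 + A x0)^2 with hm'
    have hcnn : 0 ≤ c := by positivity
    have hmnn : 0 ≤ m := by positivity
    have hstep : ∀ y, ζ 1 y ≤ c + m * ζ 0 y := by
      intro y
      have htan := tangent_ineq (hζ0gt y) ht0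
      linarith [(hfacts y).2]
    have hPle := hPmono (ζ 1) (fun y => c + m * ζ 0 y) hstep
      ⟨c + m * C' + C', fun y => by
        show (c + m * ζ 0 y) - ζ 1 y ≤ c + m * C' + C'
        have h1 := abs_le.1 (hbound 0 y)
        have h2 := abs_le.1 (hbound 1 y)
        nlinarith [mul_le_mul_of_nonneg_left h1.2 hmnn]⟩ x0
    have heq : (fun y => c + m * ζ 0 y) = (fun _ : Ω => c) + m • (ζ 0) := by
      funext y
      simp [smul_eq_mul]
    rw [heq, hadd, hsmul] at hPle
    simp only [Pi.add_apply, Pi.smul_apply, smul_eq_mul] at hPle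
    rw [hPconst] at hPle
    have hle : c * P (fun _ => 1) x0 ≤ c := by nlinarith [hP1.2 x0, hP1.1 x0]
    have hφ : c + m * A x0 = A x0 / (1 + A x0) := by
      rw [hc, hm']
      exact phi_eq h1t0
    linarith
  -- integral comparison
  have hintegrable : ∀ (μ : Measure Ω) (f : Ω → ℝ), IsFiniteMeasure μ → Measurable f →
      ∀ B : ℝ, (∀ x, |f x| ≤ B) → Integrable f μ := by
    intro μ f hμ hf B hB
    haveI := hμ
    exact ⟨hf.aestronglyMeasurable,
      HasFiniteIntegral.of_bounded (C := B) (ae_of_all _ fun x => by simpa using hB x)⟩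
  obtain ⟨hPζ1meas, C1, hC1⟩ := hmeas (ζ 1) (hm 1) ⟨C, fun x => hC 1 x⟩
  have hη1x : ∀ x, η 1 x = A x / (1 + A x) := by
    intro x
    simp only [hηdef]
    rw [hcl1, one_mul]
  have hη0x : ∀ x, η 0 x = A x := by
    intro x
    simp only [hηdef]
    rw [hcl0]
    simp
  have hint1 : Integrable (P (ζ 1)) μ₁ := hintegrable μ₁ _ hμ₁ hPζ1meas C1 hC1
  have hint2 : Integrable (η 1) μ₁ := hintegrable μ₁ _ hμ₁ (hηmeas 1) (CA / d0) (hηbd 1)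
  have hmono1 : ∫ x, P (ζ 1) x ∂μ₁ ≤ ∫ x, η 1 x ∂μ₁ :=
    integral_mono hint1 hint2 (fun x => by rw [hη1x x]; exact hkey x)
  have e1 := hadj μ₁ hμ₁ (ζ 1) (hm 1) ⟨C, fun x => hC 1 x⟩
  have e0 := hadj μ₀ hμ₀ (ζ 0) (hm 0) ⟨C, fun x => hC 0 x⟩
  have e0' : ∫ x, P (ζ 0) x ∂μ₀ = ∫ x, η 0 x ∂μ₀ :=
    integral_congr_ae (ae_of_all _ fun x => (hη0x x).symm)
  rw [hdual μ₀ μ₁ hμ₀ hμ₁]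
  refine le_trans ?_ (le_iSup₂_of_le η hηsub le_rfl)
  apply ENNReal.ofReal_le_ofReal
  rw [e1, e0, e0']
  linarith
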